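/- For m > 1 and x0 ≠ x1 in (0,1), let y(x) = mx/(1+(m−1)x) be the odds-ratio-m contour. Then for t ∈ (0,1), the point ((1−t)x0 + t·x1, (1−t)y(x0) + t·y(x1)) lies strictly below the contour: its odds ratio is strictly less than m. -/

import Mathlib

noncomputable def OR (x y : ℝ) : ℝ := (y * (1 - x)) / (x * (1 - y))

/-- Chord points of an odds-ratio contour with m > 1 have odds ratio strictly less
than m. -/
theorem OR_chord_lt (m : ℝ) (hm : 1 < m) (x0 x1 t : ℝ)
    (hx0 : x0 ∈ Set.Ioo (0:ℝ) 1) (hx1 : x1 ∈ Set.Ioo (0:ℝ) 1)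
    (hne : x0 ≠ x1) (ht : t ∈ Set.Ioo (0:ℝ) 1) :
    OR ((1 - t) * x0 + t * x1)
       ((1 - t) * (m * x0 / (1 + (m - 1) * x0)) + t * (m * x1 / (1 + (m - 1) * x1)))
      < m := by
  obtain ⟨hx00, hx01⟩ := hx0
  obtain ⟨hx10, hx11⟩ := hx1
  obtain ⟨ht0, ht1⟩ := ht
  have hd0 : (0:ℝ) < 1 + (m - 1) * x0 := by nlinarith
  have hd1 : (0:ℝ) < 1 + (m - 1) * x1 := by nlinarith
  set X : ℝ := (1 - t) * x0 + t * x1 with hX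
  set Y : ℝ := (1 - t) * (m * x0 / (1 + (m - 1) * x0)) +
      t * (m * x1 / (1 + (m - 1) * x1)) with hY
  have hX0 : 0 < X := by nlinarith
  have hX1 : X < 1 := by nlinarith
  have hy0 : m * x0 / (1 + (m - 1) * x0) < 1 := by
    rw [div_lt_one hd0]; nlinarith
  have hy1 : m * x1 / (1 + (m - 1) * x1) < 1 := by
    rw [div_lt_one hd1]; nlinarith
  have hy0' : 0 < m * x0 / (1 + (m - 1) * x0) := by positivity
  have hy1' : 0 < m * x1 / (1 + (m - 1) * x1) := by positivity
  have hY1 : Y < 1 := by rw [hY]; nlinarith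
  have hpos : 0 < X * (1 - Y) := by nlinarith
  have key : m * (X * (1 - Y)) - Y * (1 - X)
      = m * t * (1 - t) * (m - 1) * (x0 - x1) ^ 2 /
        ((1 + (m - 1) * x0) * (1 + (m - 1) * x1)) := by
    rw [hX, hY]
    field_simp [(by linarith [mul_comm x0 (m - 1)] : (0:ℝ) < 1 + x0 * (m - 1)).ne', (by linarith [mul_comm x1 (m - 1)] : (0:ℝ) < 1 + x1 * (m - 1)).ne']
    ring
  have hkpos : 0 < m * t * (1 - t) * (m - 1) * (x0 - x1) ^ 2 /
      ((1 + (m - 1) * x0) * (1 + (m - 1) * x1)) := by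
    have hsq : 0 < (x0 - x1) ^ 2 := by
      have := sub_ne_zero_of_ne hne
      positivity
    have hnum : 0 < m * t * (1 - t) * (m - 1) * (x0 - x1) ^ 2 := by
      have h1 : 0 < m := by linarith
      have h2 : 0 < 1 - t := by linarith
      have h3 : 0 < m - 1 := by linarith
      exact mul_pos (mul_pos (mul_pos (mul_pos h1 ht0) h2) h3) hsq
    exact div_pos hnum (mul_pos hd0 hd1)
  clear_value X Y
  rw [OR, div_lt_iff₀ hpos]
  linarith
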